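/- Let n ≥ 1 and p > n/(n+2) with p ≠ 1. For every probability density f on ℝ^n with finite positive second moment E(f) and 0 < ∫ f^p dx < ∞, one has R_p(f) − (n/2) log E(f) ≤ R_p(B_{p,σ}) − (n/2) log E(B_{p,σ}), where B_{p,σ} is the Barenblatt density of order p with second moment σ > 0 (the right-hand side being independent of σ by dilation invariance). Equivalently, N_p(f)/E(f)^{1+n(p−1)/2} ≤ N_p(B_{p,σ})/E(B_{p,σ})^{1+n(p−1)/2}: under a variance constraint, the Rényi entropy (power) of order p is maximized by a Barenblatt density. -/

import Mathlib

open MeasureTheory Real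

/-- The Rényi entropy of order `p`: `R_p(f) = (1/(1-p)) log ∫ f^p`. -/
noncomputable def renyiEntropy (n : ℕ) (p : ℝ) (f : EuclideanSpace ℝ (Fin n) → ℝ) : ℝ :=
  (1 / (1 - p)) * Real.log (∫ x, f x ^ p)

/-- The `p`-th Rényi entropy power: `N_p(f) = exp((2/n + p - 1) R_p(f))`. -/
noncomputable def renyiPower (n : ℕ) (p : ℝ) (f : EuclideanSpace ℝ (Fin n) → ℝ) : ℝ :=
  Real.exp ((2 / n + p - 1) * renyiEntropy n p f)

/-- The second moment of a density on `ℝ^n`: `E(f) = ∫ |x|² f(x) dx`. -/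
noncomputable def secondMoment (n : ℕ) (f : EuclideanSpace ℝ (Fin n) → ℝ) : ℝ :=
  ∫ x, ‖x‖ ^ 2 * f x

/-- The Barenblatt profile `M̃_p(x) = (C - λ|x|²)₊^{1/(p-1)}`, with
`λ = (p-1)/(2μp)`, `μ = 2 + n(p-1)`. -/
noncomputable def barenblattProfile (n : ℕ) (p C : ℝ)
    (x : EuclideanSpace ℝ (Fin n)) : ℝ :=
  max (C - (p - 1) / (2 * (2 + (n : ℝ) * (p - 1)) * p) * ‖x‖ ^ 2) 0 ^ (1 / (p - 1))

/-- Tangent line inequality for the convex function `u ↦ u^p`, `1 ≤ p`. -/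
lemma aux_tangent_le {p u v : ℝ} (hp : 1 ≤ p) (hu : 0 ≤ u) (hv : 0 < v) :
    v ^ p + p * (v ^ (p - 1) * u - v ^ (p - 1) * v) ≤ u ^ p := by
  have hs : -1 ≤ u / v - 1 := by
    have : 0 ≤ u / v := div_nonneg hu hv.le
    linarith
  have hb := one_add_mul_self_le_rpow_one_add hs hp
  have h1 : (1 : ℝ) + (u / v - 1) = u / v := by ring
  rw [h1, Real.div_rpow hu hv.le] at hb
  have hvp : (0 : ℝ) < v ^ p := Real.rpow_pos_of_pos hv p
  rw [le_div_iff₀ hvp] at hb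
  refine le_trans (le_of_eq ?_) hb
  have hv1 : v ^ (p - 1) * v = v ^ p := by
    rw [← Real.rpow_add_one hv.ne' (p - 1)]; norm_num
  have hv2 : v ^ (p - 1) * u = v ^ p * (u / v) := by
    rw [← hv1]; field_simp
  rw [hv2, ← hv1]; ring

/-- Tangent line inequality for the concave function `u ↦ u^p`, `0 < p ≤ 1`. -/
lemma aux_tangent_ge {p u v : ℝ} (hp0 : 0 < p) (hp : p ≤ 1) (hu : 0 ≤ u) (hv : 0 < v) :
    u ^ p ≤ v ^ p + p * (v ^ (p - 1) * u - v ^ (p - 1) * v) := by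
  have hs : -1 ≤ u / v - 1 := by
    have : 0 ≤ u / v := div_nonneg hu hv.le
    linarith
  have hb := rpow_one_add_le_one_add_mul_self hs hp0.le hp
  have h1 : (1 : ℝ) + (u / v - 1) = u / v := by ring
  rw [h1, Real.div_rpow hu hv.le] at hb
  have hvp : (0 : ℝ) < v ^ p := Real.rpow_pos_of_pos hv p
  rw [div_le_iff₀ hvp] at hb
  refine le_trans hb (le_of_eq ?_)
  have hv1 : v ^ (p - 1) * v = v ^ p := by
    rw [← Real.rpow_add_one hv.ne' (p - 1)]; norm_num
  have hv2 : v ^ (p - 1) * u = v ^ p * (u / v) := by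
    rw [← hv1]; field_simp
  rw [hv2, ← hv1]; ring

/-- `(v^(1/(p-1)))^p = v * v^(1/(p-1))` for `v > 0`. -/
lemma aux_rpow_id {p v : ℝ} (hp1 : p ≠ 1) (hv : 0 < v) :
    (v ^ (1 / (p - 1))) ^ p = v * v ^ (1 / (p - 1)) := by
  have hps : p - 1 ≠ 0 := sub_ne_zero.2 hp1
  rw [← Real.rpow_mul hv.le]
  have he : 1 / (p - 1) * p = 1 + 1 / (p - 1) := by
    field_simp
    ring
  rw [he, Real.rpow_add hv, Real.rpow_one]

/-- helper: integrability after cancelling a nonzero constant -/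
lemma aux_integrable_of_const_mul {α : Type*} [MeasurableSpace α] {μ : Measure α}
    {c : ℝ} (hc : c ≠ 0) {F : α → ℝ} (h : Integrable (fun x => c * F x) μ) :
    Integrable F μ := by
  have h2 := h.const_mul c⁻¹
  refine h2.congr (Filter.Eventually.of_forall fun x => ?_)
  field_simp

/-- Under a variance constraint the Rényi entropy (power) of order `p`
is maximized by a Barenblatt density: for every probability density `f` with finite
positive second moment and `0 < ∫ f^p < ∞`, and `B_{p,σ}` the Barenblatt density with
second moment `σ`, one has `R_p(f) - (n/2) log E(f) ≤ R_p(B_{p,σ}) - (n/2) log E(B_{p,σ})`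
and equivalently `N_p(f)/E(f)^{1+n(p-1)/2} ≤ N_p(B_{p,σ})/E(B_{p,σ})^{1+n(p-1)/2}`. -/
theorem renyi_entropy_max_barenblatt
    (n : ℕ) (hn : 1 ≤ n) (p : ℝ) (hp : (n : ℝ) / (n + 2) < p) (hp1 : p ≠ 1)
    (f : EuclideanSpace ℝ (Fin n) → ℝ)
    (hf_nonneg : ∀ x, 0 ≤ f x)
    (hf_int : Integrable f)
    (hf_mass : ∫ x, f x = 1)
    (hf_mom : Integrable (fun x => ‖x‖ ^ 2 * f x))
    (hf_mom_pos : 0 < secondMoment n f)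
    (hfp_int : Integrable (fun x => f x ^ p))
    (hfp_pos : 0 < ∫ x, f x ^ p)
    -- the Barenblatt density `B_{p,σ}` of second moment `σ`, obtained by dilating the
    -- unit-mass Barenblatt profile:
    (C : ℝ) (hC : 0 < C)
    (hmass : ∫ x, barenblattProfile n p C x = 1)
    (σ a : ℝ) (hσ : 0 < σ) (ha : 0 < a)
    (B : EuclideanSpace ℝ (Fin n) → ℝ)
    (hB : B = fun x => a ^ n * barenblattProfile n p C (a • x))
    (hBσ : secondMoment n B = σ) :
    renyiEntropy n p f - (n : ℝ) / 2 * Real.log (secondMoment n f)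
        ≤ renyiEntropy n p B - (n : ℝ) / 2 * Real.log (secondMoment n B)
      ∧ renyiPower n p f / secondMoment n f ^ (1 + (n : ℝ) * (p - 1) / 2)
          ≤ renyiPower n p B / secondMoment n B ^ (1 + (n : ℝ) * (p - 1) / 2) := by
  have hn' : (1 : ℝ) ≤ (n : ℝ) := by exact_mod_cast hn
  have hp0 : 0 < p := lt_of_le_of_lt (by positivity) hp
  have hps : p - 1 ≠ 0 := sub_ne_zero.2 hp1
  have hnp2 : (n : ℝ) < p * ((n : ℝ) + 2) := by
    rw [div_lt_iff₀ (by positivity)] at hp; linarith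
  have hμ : 0 < 2 + (n : ℝ) * (p - 1) := by
    rcases lt_or_ge p 1 with hcase | hcase
    · nlinarith
    · nlinarith
  set lam : ℝ := (p - 1) / (2 * (2 + (n : ℝ) * (p - 1)) * p) with hlam_def
  set g : EuclideanSpace ℝ (Fin n) → ℝ := barenblattProfile n p C with hg_def
  have hg_eq : ∀ x, g x = max (C - lam * ‖x‖ ^ 2) 0 ^ (1 / (p - 1)) := fun x => rfl
  have hg_nonneg : ∀ x, 0 ≤ g x := fun x => Real.rpow_nonneg (le_max_right _ _) _
  clear_value g
  have hlam_pos : 1 < p → 0 < lam := fun hgt =>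
    div_pos (by linarith) (mul_pos (mul_pos two_pos hμ) hp0)
  have hlam_neg : p < 1 → lam < 0 := fun hlt =>
    div_neg_of_neg_of_pos (by linarith) (mul_pos (mul_pos two_pos hμ) hp0)
  clear_value lam
  -- pointwise power identity for profile-shaped functions
  have hprof_pow : ∀ (D k : ℝ), (p < 1 → k < 0) → 0 < D → ∀ x : EuclideanSpace ℝ (Fin n),
      (max (D - k * ‖x‖ ^ 2) 0 ^ (1 / (p - 1))) ^ p
        = (D - k * ‖x‖ ^ 2) * max (D - k * ‖x‖ ^ 2) 0 ^ (1 / (p - 1)) := by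
    intro D k hk hD x
    rcases lt_or_gt_of_ne hp1 with hcase | hcase
    · have hv : 0 < D - k * ‖x‖ ^ 2 := by
        have := hk hcase
        nlinarith [sq_nonneg ‖x‖]
      rw [max_eq_left hv.le, aux_rpow_id hp1 hv]
    · rcases le_or_gt (D - k * ‖x‖ ^ 2) 0 with hv | hv
      · have hep : (0 : ℝ) < 1 / (p - 1) := by
          have : (0:ℝ) < p - 1 := by linarith
          positivity
        rw [max_eq_right hv, Real.zero_rpow hep.ne', Real.zero_rpow hp0.ne', mul_zero]
      · rw [max_eq_left hv.le, aux_rpow_id hp1 hv]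
  -- integrability of g from hmass
  have hg_int : Integrable g := by
    by_contra hcon
    rw [integral_undef hcon] at hmass; norm_num at hmass
  -- second moment integrand of g
  set ψ : EuclideanSpace ℝ (Fin n) → ℝ := fun x => ‖x‖ ^ 2 * g x with hψ_def
  clear_value ψ
  have hψ_nonneg : ∀ x, 0 ≤ ψ x := fun x => by
    rw [hψ_def]; exact mul_nonneg (by positivity) (hg_nonneg x)
  -- B's second moment integrand; integrability from hBσ
  have hBσ' : ∫ x, ‖x‖ ^ 2 * B x = σ := hBσ
  have hB_mom_int : Integrable (fun x => ‖x‖ ^ 2 * B x) := by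
    by_contra hcon
    rw [integral_undef hcon] at hBσ'; exact hσ.ne hBσ'
  have han : (0:ℝ) < a ^ n := pow_pos ha n
  have hBmom_eq : (fun x => ‖x‖ ^ 2 * B x) = fun x => (a ^ n / a ^ 2) * ψ (a • x) := by
    funext x
    rw [hB]
    simp only [hψ_def, norm_smul, Real.norm_eq_abs, abs_of_pos ha, mul_pow]
    field_simp [ha.ne']
  have hψ_int : Integrable ψ := by
    rw [hBmom_eq] at hB_mom_int
    have h2 := aux_integrable_of_const_mul
      ((div_pos han (pow_pos ha 2)).ne') hB_mom_int
    exact (integrable_comp_smul_iff volume ψ ha.ne').1 h2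
  set Eg : ℝ := ∫ x, ψ x with hEg_def
  clear_value Eg
  have hEg_nonneg : 0 ≤ Eg := by rw [hEg_def]; exact integral_nonneg hψ_nonneg
  -- value of B's second moment in terms of Eg
  have hEg_val : Eg = a ^ 2 * σ := by
    have h1 : ∫ x, ‖x‖ ^ 2 * B x = (a ^ n / a ^ 2) * ((a ^ n)⁻¹ * Eg) := by
      rw [hBmom_eq, integral_const_mul,
        Measure.integral_comp_smul_of_nonneg volume ψ a (hR := ha.le),
        finrank_euclideanSpace_fin, smul_eq_mul, hEg_def]
    have hstep2 : a ^ n / a ^ 2 * ((a ^ n)⁻¹ * Eg) = Eg / a ^ 2 := by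
      rw [div_mul_eq_mul_div, ← mul_assoc, mul_inv_cancel₀ han.ne', one_mul]
    rw [hBσ', hstep2] at h1
    rw [h1, mul_comm (a ^ 2) (Eg / a ^ 2), div_mul_cancel₀ Eg (pow_pos ha 2).ne']
  have hEg_pos : 0 < Eg := by rw [hEg_val]; positivity
  -- g^p : pointwise identity, integrability, value
  have hgp_eq : ∀ x, g x ^ p = C * g x - lam * ψ x := by
    intro x
    rw [hg_eq, hprof_pow C lam hlam_neg hC x, hψ_def, ← hg_eq]
    ring
  have hgp_int : Integrable (fun x => g x ^ p) := by
    refine ((hg_int.const_mul C).sub (hψ_int.const_mul lam)).congr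
      (Filter.Eventually.of_forall fun x => ?_)
    exact (hgp_eq x).symm
  set Ig : ℝ := ∫ x, g x ^ p with hIg_def
  clear_value Ig
  have hIg_val : Ig = C - lam * Eg := by
    rw [hIg_def]
    calc ∫ x, g x ^ p = ∫ x, (C * g x - lam * ψ x) :=
          integral_congr_ae (Filter.Eventually.of_forall hgp_eq)
      _ = C * (∫ x, g x) - lam * ∫ x, ψ x := by
          rw [integral_sub (hg_int.const_mul C) (hψ_int.const_mul lam),
            integral_const_mul, integral_const_mul]
      _ = C - lam * Eg := by rw [hmass, ← hEg_def]; ring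
  have hIg_pos : 0 < Ig := by
    rcases lt_or_gt_of_ne hp1 with hcase | hcase
    · have h0 : lam * Eg ≤ 0 :=
        mul_nonpos_iff.2 (Or.inr ⟨(hlam_neg hcase).le, hEg_nonneg⟩)
      rw [hIg_val]; linarith
    · rw [hIg_def]
      have h1 : 0 < volume (Function.support g) := by
        refine (integral_pos_iff_support_of_nonneg hg_nonneg hg_int).1 ?_
        rw [hmass]; norm_num
      have h2 : Function.support g ⊆ Function.support (fun x => g x ^ p) := by
        intro x hx
        have hgx : 0 < g x := lt_of_le_of_ne (hg_nonneg x) (Ne.symm hx)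
        exact (Real.rpow_pos_of_pos hgx p).ne'
      refine (integral_pos_iff_support_of_nonneg
        (fun x => Real.rpow_nonneg (hg_nonneg x) p) hgp_int).2 ?_
      exact lt_of_lt_of_le h1 (measure_mono h2)
  -- f's data
  set Ef : ℝ := secondMoment n f with hEf_def
  have hEf_pos : 0 < Ef := hf_mom_pos
  have hEf_int_eq : Ef = ∫ x, ‖x‖ ^ 2 * f x := rfl
  clear_value Ef
  set If : ℝ := ∫ x, f x ^ p with hIf_def
  clear_value If
  -- dilation parameter matching second moments
  obtain ⟨t, ht, ht2⟩ : ∃ t : ℝ, 0 < t ∧ t ^ 2 = Eg / Ef :=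
    ⟨Real.sqrt (Eg / Ef), Real.sqrt_pos.2 (div_pos hEg_pos hEf_pos),
      Real.sq_sqrt (div_pos hEg_pos hEf_pos).le⟩
  have htn : (0:ℝ) < t ^ n := pow_pos ht n
  -- the competitor h : dilate of g with second moment Ef
  set h : EuclideanSpace ℝ (Fin n) → ℝ := fun x => t ^ n * g (t • x) with hh_def
  clear_value h
  have hh_nonneg : ∀ x, 0 ≤ h x := fun x => by
    rw [hh_def]; exact mul_nonneg htn.le (hg_nonneg _)
  -- profile shape of h
  set w : ℝ := (t ^ n) ^ (p - 1) with hw_def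
  have hw : 0 < w := hw_def ▸ Real.rpow_pos_of_pos htn _
  clear_value w
  set Dt : ℝ := w * C with hDt_def
  clear_value Dt
  set lamt : ℝ := w * lam * t ^ 2 with hlamt_def
  clear_value lamt
  have hDt : 0 < Dt := hDt_def ▸ mul_pos hw hC
  have hlamt_neg : p < 1 → lamt < 0 := fun hlt => hlamt_def ▸
    mul_neg_of_neg_of_pos (mul_neg_of_pos_of_neg hw (hlam_neg hlt)) (pow_pos ht 2)
  have hwe : w ^ (1 / (p - 1)) = t ^ n := by
    rw [hw_def, ← Real.rpow_mul htn.le, mul_one_div, div_self hps, Real.rpow_one]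
  have hh_prof : ∀ x, h x = max (Dt - lamt * ‖x‖ ^ 2) 0 ^ (1 / (p - 1)) := by
    intro x
    have hnorm : ‖t • x‖ ^ 2 = t ^ 2 * ‖x‖ ^ 2 := by
      rw [norm_smul, Real.norm_eq_abs, abs_of_pos ht, mul_pow]
    have hbase : Dt - lamt * ‖x‖ ^ 2 = w * (C - lam * ‖t • x‖ ^ 2) := by
      rw [hnorm, hDt_def, hlamt_def]; ring
    simp only [hh_def]
    rw [hg_eq, ← hwe, ← Real.mul_rpow hw.le (le_max_right _ _),
      mul_max_of_nonneg _ _ hw.le, mul_zero, ← hbase]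
  -- change-of-variable helpers for the dilation x ↦ t • x
  have hcomp_int : ∀ (φ : EuclideanSpace ℝ (Fin n) → ℝ), Integrable φ →
      Integrable (fun x => φ (t • x)) := fun φ hφ =>
    (integrable_comp_smul_iff volume φ ht.ne').2 hφ
  have hcomp_val : ∀ (φ : EuclideanSpace ℝ (Fin n) → ℝ),
      ∫ x, φ (t • x) = (t ^ n)⁻¹ * ∫ x, φ x := fun φ => by
    rw [Measure.integral_comp_smul_of_nonneg volume φ t (hR := ht.le),
      finrank_euclideanSpace_fin, smul_eq_mul]
  have hh_int : Integrable h := by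
    rw [hh_def]; exact (hcomp_int g hg_int).const_mul _
  have hh_mass : ∫ x, h x = 1 := by
    simp only [hh_def]
    rw [integral_const_mul, hcomp_val g, hmass, mul_one, mul_inv_cancel₀ htn.ne']
  have hhm_eq : (fun x => ‖x‖ ^ 2 * h x) = fun x => (t ^ n / t ^ 2) * ψ (t • x) := by
    funext x
    simp only [hh_def, hψ_def, norm_smul, Real.norm_eq_abs, abs_of_pos ht, mul_pow]
    field_simp [ht.ne']
  have hhm_int : Integrable (fun x => ‖x‖ ^ 2 * h x) := by
    rw [hhm_eq]; exact (hcomp_int ψ hψ_int).const_mul _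
  have hEh : ∫ x, ‖x‖ ^ 2 * h x = Ef := by
    rw [hhm_eq, integral_const_mul, hcomp_val ψ, ← hEg_def]
    have hstep : t ^ n / t ^ 2 * ((t ^ n)⁻¹ * Eg) = Eg / t ^ 2 := by
      rw [div_mul_eq_mul_div, ← mul_assoc, mul_inv_cancel₀ htn.ne', one_mul]
    rw [hstep, ht2, div_div_eq_mul_div, mul_comm Eg Ef, mul_div_assoc,
      div_self hEg_pos.ne', mul_one]
  -- h^p
  have hhp_eq : (fun x => h x ^ p) = fun x => (t ^ n) ^ p * g (t • x) ^ p := by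
    funext x
    simp only [hh_def]
    rw [Real.mul_rpow htn.le (hg_nonneg _)]
  have hhp_int : Integrable (fun x => h x ^ p) := by
    rw [hhp_eq]; exact (hcomp_int (fun x => g x ^ p) hgp_int).const_mul _
  set Ih : ℝ := ∫ x, h x ^ p with hIh_def
  clear_value Ih
  have hIh_val : Ih = (t ^ n) ^ p * ((t ^ n)⁻¹ * Ig) := by
    rw [hIh_def, hhp_eq, integral_const_mul, hcomp_val (fun x => g x ^ p), ← hIg_def]
  have hIh_pos : 0 < Ih := by
    rw [hIh_val]
    exact mul_pos (Real.rpow_pos_of_pos htn p) (mul_pos (inv_pos.2 htn) hIg_pos)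
  -- integrability and value of the tangent-line majorant
  have int1 : Integrable (fun x => Dt * f x - lamt * (‖x‖ ^ 2 * f x)) :=
    (hf_int.const_mul Dt).sub (hf_mom.const_mul lamt)
  have int2 : Integrable (fun x => Dt * h x - lamt * (‖x‖ ^ 2 * h x)) :=
    (hh_int.const_mul Dt).sub (hhm_int.const_mul lamt)
  have ival1 : ∫ x, (Dt * f x - lamt * (‖x‖ ^ 2 * f x)) = Dt - lamt * Ef := by
    rw [integral_sub (hf_int.const_mul Dt) (hf_mom.const_mul lamt),
      integral_const_mul, integral_const_mul, hf_mass, ← hEf_int_eq]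
    ring
  have ival2 : ∫ x, (Dt * h x - lamt * (‖x‖ ^ 2 * h x)) = Dt - lamt * Ef := by
    rw [integral_sub (hh_int.const_mul Dt) (hhm_int.const_mul lamt),
      integral_const_mul, integral_const_mul, hh_mass, hEh]
    ring
  have intsum : Integrable (fun x => p * ((Dt * f x - lamt * (‖x‖ ^ 2 * f x))
      - (Dt * h x - lamt * (‖x‖ ^ 2 * h x)))) := (int1.sub int2).const_mul p
  have hrhs_int : Integrable (fun x => h x ^ p + p * ((Dt * f x - lamt * (‖x‖ ^ 2 * f x))
      - (Dt * h x - lamt * (‖x‖ ^ 2 * h x)))) :=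
    hhp_int.add intsum
  have hrhs_val : ∫ x, (h x ^ p + p * ((Dt * f x - lamt * (‖x‖ ^ 2 * f x))
      - (Dt * h x - lamt * (‖x‖ ^ 2 * h x)))) = Ih := by
    rw [integral_add hhp_int intsum, integral_const_mul,
      integral_sub int1 int2, ival1, ival2, ← hIh_def]
    ring
  -- the key comparison of entropies of f and h
  have key1 : 1 / (1 - p) * Real.log If ≤ 1 / (1 - p) * Real.log Ih := by
    rcases lt_or_gt_of_ne hp1 with hlt | hgt
    · -- p < 1 : concavity gives If ≤ Ih
      have hIfIh : If ≤ Ih := by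
        rw [hIf_def, ← hrhs_val]
        refine integral_mono hfp_int hrhs_int fun x => ?_
        have hvpos : 0 < Dt - lamt * ‖x‖ ^ 2 := by
          have h0 : lamt * ‖x‖ ^ 2 ≤ 0 :=
            mul_nonpos_iff.2 (Or.inr ⟨(hlamt_neg hlt).le, by positivity⟩)
          linarith
        have hhx : h x = (Dt - lamt * ‖x‖ ^ 2) ^ (1 / (p - 1)) := by
          rw [hh_prof x, max_eq_left hvpos.le]
        have hhx_pos : 0 < h x := hhx ▸ Real.rpow_pos_of_pos hvpos _
        have hpe : h x ^ (p - 1) = Dt - lamt * ‖x‖ ^ 2 := by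
          rw [hhx, ← Real.rpow_mul hvpos.le, one_div, inv_mul_cancel₀ hps, Real.rpow_one]
        have haux := aux_tangent_ge hp0 hlt.le (hf_nonneg x) hhx_pos
        rw [hpe] at haux
        calc f x ^ p ≤ h x ^ p + p * ((Dt - lamt * ‖x‖ ^ 2) * f x
              - (Dt - lamt * ‖x‖ ^ 2) * h x) := haux
          _ = h x ^ p + p * ((Dt * f x - lamt * (‖x‖ ^ 2 * f x))
              - (Dt * h x - lamt * (‖x‖ ^ 2 * h x))) := by ring
      have h1p : (0:ℝ) < 1 / (1 - p) := div_pos one_pos (by linarith)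
      exact mul_le_mul_of_nonneg_left (Real.log_le_log hfp_pos hIfIh) h1p.le
    · -- 1 < p : convexity gives Ih ≤ If
      have hIhIf : Ih ≤ If := by
        rw [hIf_def, ← hrhs_val]
        refine integral_mono hrhs_int hfp_int fun x => ?_
        have hep : (0 : ℝ) < 1 / (p - 1) := by
          have : (0:ℝ) < p - 1 := by linarith
          positivity
        rcases le_or_gt (Dt - lamt * ‖x‖ ^ 2) 0 with hv0 | hv0
        · have hhx : h x = 0 := by
            rw [hh_prof x, max_eq_right hv0, Real.zero_rpow hep.ne']
          have h3 : 0 ≤ f x ^ p := Real.rpow_nonneg (hf_nonneg x) p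
          calc h x ^ p + p * ((Dt * f x - lamt * (‖x‖ ^ 2 * f x))
                - (Dt * h x - lamt * (‖x‖ ^ 2 * h x)))
              = p * ((Dt - lamt * ‖x‖ ^ 2) * f x) := by
                rw [hhx, Real.zero_rpow hp0.ne']; ring
            _ ≤ 0 := mul_nonpos_iff.2 (Or.inl ⟨hp0.le,
                mul_nonpos_iff.2 (Or.inr ⟨hv0, hf_nonneg x⟩)⟩)
            _ ≤ f x ^ p := h3
        · have hhx : h x = (Dt - lamt * ‖x‖ ^ 2) ^ (1 / (p - 1)) := by
            rw [hh_prof x, max_eq_left hv0.le]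
          have hhx_pos : 0 < h x := hhx ▸ Real.rpow_pos_of_pos hv0 _
          have hpe : h x ^ (p - 1) = Dt - lamt * ‖x‖ ^ 2 := by
            rw [hhx, ← Real.rpow_mul hv0.le, one_div, inv_mul_cancel₀ hps, Real.rpow_one]
          have haux := aux_tangent_le hgt.le (hf_nonneg x) hhx_pos
          rw [hpe] at haux
          calc h x ^ p + p * ((Dt * f x - lamt * (‖x‖ ^ 2 * f x))
                - (Dt * h x - lamt * (‖x‖ ^ 2 * h x)))
              = h x ^ p + p * ((Dt - lamt * ‖x‖ ^ 2) * f x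
                - (Dt - lamt * ‖x‖ ^ 2) * h x) := by ring
            _ ≤ f x ^ p := haux
      have h1p : 1 / (1 - p) < 0 := div_neg_of_pos_of_neg one_pos (by linarith)
      exact mul_le_mul_of_nonpos_left (Real.log_le_log hIh_pos hIhIf) h1p.le
  -- logarithmic bookkeeping
  set IB : ℝ := ∫ x, B x ^ p with hIB_def
  clear_value IB
  have hBp_eq : (fun x => B x ^ p) = fun x => (a ^ n) ^ p * g (a • x) ^ p := by
    funext x
    rw [hB, Real.mul_rpow han.le (hg_nonneg _)]
  have hIB_val : IB = (a ^ n) ^ p * ((a ^ n)⁻¹ * Ig) := by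
    rw [hIB_def, hBp_eq, integral_const_mul,
      Measure.integral_comp_smul_of_nonneg volume (fun x => g x ^ p) a (hR := ha.le),
      finrank_euclideanSpace_fin, smul_eq_mul, ← hIg_def]
  have hIB_pos : 0 < IB := by
    rw [hIB_val]
    exact mul_pos (Real.rpow_pos_of_pos han p) (mul_pos (inv_pos.2 han) hIg_pos)
  have klogIh : Real.log Ih = (p - 1) * ((n:ℝ) * Real.log t) + Real.log Ig := by
    rw [hIh_val, Real.log_mul (Real.rpow_pos_of_pos htn p).ne'
        (mul_pos (inv_pos.2 htn) hIg_pos).ne',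
      Real.log_mul (inv_pos.2 htn).ne' hIg_pos.ne', Real.log_rpow htn, Real.log_inv,
      Real.log_pow]
    push_cast; ring
  have klogIB : Real.log IB = (p - 1) * ((n:ℝ) * Real.log a) + Real.log Ig := by
    rw [hIB_val, Real.log_mul (Real.rpow_pos_of_pos han p).ne'
        (mul_pos (inv_pos.2 han) hIg_pos).ne',
      Real.log_mul (inv_pos.2 han).ne' hIg_pos.ne', Real.log_rpow han, Real.log_inv,
      Real.log_pow]
    push_cast; ring
  have klogEf : Real.log Ef = Real.log Eg - 2 * Real.log t := by
    have hEf_val : Ef = Eg / t ^ 2 := by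
      rw [ht2, div_div_eq_mul_div, mul_comm Eg Ef, mul_div_assoc, div_self hEg_pos.ne', mul_one]
    rw [hEf_val, Real.log_div hEg_pos.ne' (pow_pos ht 2).ne', Real.log_pow]
    push_cast; ring
  have klogσ : Real.log σ = Real.log Eg - 2 * Real.log a := by
    have hσ_val : σ = Eg / a ^ 2 := by
      rw [hEg_val, mul_comm (a ^ 2) σ, mul_div_assoc, div_self (pow_pos ha 2).ne', mul_one]
    rw [hσ_val, Real.log_div hEg_pos.ne' (pow_pos ha 2).ne', Real.log_pow]
    push_cast; ring
  have h1mp : (1:ℝ) - p ≠ 0 := fun hc => hp1 (by linarith)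
  have hfrac : 1 / (1 - p) * (p - 1) = -1 := by
    field_simp
    ring
  have e1 : 1 / (1 - p) * Real.log Ih
      = -((n:ℝ) * Real.log t) + 1 / (1 - p) * Real.log Ig := by
    rw [klogIh, mul_add, ← mul_assoc, hfrac]; ring
  have e2 : 1 / (1 - p) * Real.log IB
      = -((n:ℝ) * Real.log a) + 1 / (1 - p) * Real.log Ig := by
    rw [klogIB, mul_add, ← mul_assoc, hfrac]; ring
  have part1 : renyiEntropy n p f - (n : ℝ) / 2 * Real.log Ef
      ≤ renyiEntropy n p B - (n : ℝ) / 2 * Real.log σ := by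
    have e4 : (n:ℝ)/2 * Real.log Ef = (n:ℝ)/2 * Real.log Eg - (n:ℝ) * Real.log t := by
      rw [klogEf]; ring
    have e5 : (n:ℝ)/2 * Real.log σ = (n:ℝ)/2 * Real.log Eg - (n:ℝ) * Real.log a := by
      rw [klogσ]; ring
    simp only [renyiEntropy, ← hIf_def, ← hIB_def]
    linarith [key1, e1, e2, e4, e5]
  rw [hBσ]
  refine ⟨part1, ?_⟩
  -- the entropy-power form follows by exponentiating
  have hn0 : (0:ℝ) < (n:ℝ) := by linarith
  have hq : (2 / (n:ℝ) + p - 1) * ((n:ℝ) / 2) = 1 + (n:ℝ) * (p - 1) / 2 := by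
    field_simp; ring
  have hc_pos : 0 < 2 / (n:ℝ) + p - 1 := by
    have hrw : 2 / (n:ℝ) + p - 1 = (2 + (n:ℝ) * (p - 1)) / n := by
      field_simp; ring
    rw [hrw]
    exact div_pos hμ hn0
  simp only [renyiPower]
  rw [Real.rpow_def_of_pos hEf_pos, Real.rpow_def_of_pos hσ, ← Real.exp_sub, ← Real.exp_sub,
    Real.exp_le_exp]
  calc (2 / (n:ℝ) + p - 1) * renyiEntropy n p f - Real.log Ef * (1 + (n:ℝ) * (p - 1) / 2)
      = (2 / (n:ℝ) + p - 1) * (renyiEntropy n p f - (n:ℝ) / 2 * Real.log Ef) := by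
        rw [← hq]; ring
    _ ≤ (2 / (n:ℝ) + p - 1) * (renyiEntropy n p B - (n:ℝ) / 2 * Real.log σ) :=
        mul_le_mul_of_nonneg_left part1 hc_pos.le
    _ = (2 / (n:ℝ) + p - 1) * renyiEntropy n p B - Real.log σ * (1 + (n:ℝ) * (p - 1) / 2) := by
        rw [← hq]; ring
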